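/- Let f : V → W be a ℂ-linear map between two finite exhaustively and decreasingly filtered finite-dimensional complex vector spaces (V,F) and (W,G) with f(F p) ⊆ G p for all p. Then f is strictly compatible with the filtrations (meaning f(F p) = (range f) ∩ G p for every integer p) if and only if the cokernel of the induced map ξ(f) : ξ(V,F) → ξ(W,G) has no λ-torsion, i.e. if and only if for every y ∈ ξ(W,G) with λ·y ∈ (f ⊗ id)(ξ(V,F)) one has y ∈ (f ⊗ id)(ξ(V,F)). (This is the paper's assertion that f is strictly compatible with the filtrations iff ξ(f) is a morphism of vector bundles on 𝔸¹.) -/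

import Mathlib

noncomputable section
open Polynomial LaurentPolynomial TensorProduct

set_option maxSynthPendingDepth 3

/-- `ℂ[λ]` (that is, `Polynomial ℂ`) acts on `ℂ[λ,λ⁻¹]` (that is, `LaurentPolynomial ℂ`)
compatibly with the `ℂ`-actions. -/
instance : IsScalarTower ℂ (Polynomial ℂ) (LaurentPolynomial ℂ) :=
  IsScalarTower.of_algebraMap_eq fun c => by
    simp [LaurentPolynomial.algebraMap_eq_toLaurent, Polynomial.algebraMap_eq]

/-- The Rees module `ξ(V,F)` of a filtered complex vector space `(V,F)`: the `ℂ[λ]`-submodule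
of `V ⊗_ℂ ℂ[λ,λ⁻¹]` (realized here as `ℂ[λ,λ⁻¹] ⊗_ℂ V`) generated by the elements
`v ⊗ λ^{-p} = T (-p) ⊗ v` with `p ∈ ℤ` and `v ∈ F p`. -/
def ReesModule (V : Type*) [AddCommGroup V] [Module ℂ V] (F : ℤ → Submodule ℂ V) :
    Submodule (Polynomial ℂ) ((LaurentPolynomial ℂ) ⊗[ℂ] V) :=
  Submodule.span (Polynomial ℂ)
    {x | ∃ (p : ℤ) (v : V), v ∈ F p ∧ x = (LaurentPolynomial.T (-p)) ⊗ₜ[ℂ] v}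


section aux
variable (V : Type*) [AddCommGroup V] [Module ℂ V]

/-- coefficient equivalence -/
def reesE : (LaurentPolynomial ℂ) ⊗[ℂ] V ≃ₗ[ℂ] (ℤ →₀ V) :=
  (LinearEquiv.rTensor V (AddMonoidAlgebra.coeffLinearEquiv ℂ)).trans
    (TensorProduct.finsuppScalarLeft ℂ V ℤ)

variable {V}

lemma reesE_T (n : ℤ) (v : V) :
    reesE V (LaurentPolynomial.T n ⊗ₜ[ℂ] v) = Finsupp.single n v := by
  show TensorProduct.finsuppScalarLeft ℂ V ℤ (Finsupp.single n (1:ℂ) ⊗ₜ[ℂ] v) = _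
  ext i
  rw [TensorProduct.finsuppScalarLeft_apply_tmul_apply]
  simp [Finsupp.single_apply]

lemma reesE_symm_single (n : ℤ) (v : V) :
    (reesE V).symm (Finsupp.single n v) = LaurentPolynomial.T n ⊗ₜ[ℂ] v := by
  rw [LinearEquiv.symm_apply_eq, reesE_T]

lemma reesE_tmul (q : LaurentPolynomial ℂ) (v : V) (n : ℤ) :
    reesE V (q ⊗ₜ[ℂ] v) n = q.coeff n • v := by
  show TensorProduct.finsuppScalarLeft ℂ V ℤ (q.coeff ⊗ₜ[ℂ] v) n = _
  rw [TensorProduct.finsuppScalarLeft_apply_tmul_apply]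

lemma reesE_X_smul (x : (LaurentPolynomial ℂ) ⊗[ℂ] V) (n : ℤ) :
    reesE V ((X : Polynomial ℂ) • x) n = reesE V x (n - 1) := by
  induction x using TensorProduct.induction_on with
  | zero => simp
  | tmul q v =>
      rw [TensorProduct.smul_tmul', reesE_tmul, reesE_tmul]
      congr 1
      show (toLaurent (X : Polynomial ℂ) * q).coeff n = q.coeff (n - 1)
      rw [Polynomial.toLaurent_X]
      show ((AddMonoidAlgebra.single (1:ℤ) (1:ℂ)) * q).coeff n = q.coeff (n - 1)
      rw [AddMonoidAlgebra.coeff_single_mul_apply, one_mul]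
      congr 1
      omega
  | add a b ha hb => rw [smul_add, map_add, Finsupp.add_apply, ha, hb, map_add,
      Finsupp.add_apply]

variable {W : Type*} [AddCommGroup W] [Module ℂ W]

lemma reesE_baseChange (f : V →ₗ[ℂ] W) (x : (LaurentPolynomial ℂ) ⊗[ℂ] V) (n : ℤ) :
    reesE W (f.baseChange (LaurentPolynomial ℂ) x) n = f (reesE V x n) := by
  induction x using TensorProduct.induction_on with
  | zero => simp
  | tmul q v => rw [LinearMap.baseChange_tmul, reesE_tmul, reesE_tmul, map_smul]
  | add a b ha hb =>
      rw [map_add, map_add, Finsupp.add_apply, ha, hb, map_add, Finsupp.add_apply, map_add]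

variable {F : ℤ → Submodule ℂ V}

lemma mem_reesModule_iff (hFdec : ∀ p : ℤ, F (p + 1) ≤ F p)
    (x : (LaurentPolynomial ℂ) ⊗[ℂ] V) :
    x ∈ ReesModule V F ↔ ∀ n : ℤ, reesE V x n ∈ F (-n) := by
  have hF : Antitone F := antitone_int_of_succ_le hFdec
  constructor
  · intro hx
    induction hx using Submodule.span_induction with
    | mem z hz =>
        obtain ⟨p, v, hv, rfl⟩ := hz
        intro n
        rw [reesE_T, Finsupp.single_apply]
        split
        · next h => exact hF (by omega : -n ≤ p) hv
        · exact Submodule.zero_mem _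
    | zero => intro n; simp
    | add a b _ _ ha hb => intro n; rw [map_add, Finsupp.add_apply]; exact Submodule.add_mem _ (ha n) (hb n)
    | smul c z _ hz =>
        induction c using Polynomial.induction_on' with
        | add p q hp hq =>
            intro n
            rw [add_smul, map_add, Finsupp.add_apply]
            exact Submodule.add_mem _ (hp n) (hq n)
        | monomial k a =>
            have hXpow : ∀ (k : ℕ) (n : ℤ),
                reesE V ((X ^ k : Polynomial ℂ) • z) n ∈ F (-n) := by
              intro k
              induction k with
              | zero => intro n; simpa using hz n
              | succ k ih =>
                  intro n
                  rw [pow_succ, mul_comm, mul_smul, reesE_X_smul]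
                  exact hF (by omega : -n ≤ -(n-1)) (ih (n - 1))
            intro n
            have hCa : (Polynomial.C a) • ((X ^ k : Polynomial ℂ) • z)
                = a • ((X ^ k : Polynomial ℂ) • z) := by
              rw [← Polynomial.algebraMap_eq, algebraMap_smul]
            rw [← Polynomial.C_mul_X_pow_eq_monomial, mul_smul, hCa, map_smul,
              Finsupp.smul_apply]
            exact Submodule.smul_mem _ a (hXpow k n)
  · intro h
    have hx : ((reesE V x).support).sum
        (fun n => LaurentPolynomial.T n ⊗ₜ[ℂ] (reesE V x n)) = x := by
      apply (reesE V).injective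
      rw [map_sum]
      simp_rw [reesE_T]
      exact Finsupp.sum_single (reesE V x)
    rw [← hx]
    exact Submodule.sum_mem _ fun n _ => Submodule.subset_span
      ⟨-n, reesE V x n, h n, by rw [neg_neg]⟩

end aux

lemma sum_T_reesE {V : Type*} [AddCommGroup V] [Module ℂ V]
    (x : (LaurentPolynomial ℂ) ⊗[ℂ] V) :
    ((reesE V x).support).sum (fun n => LaurentPolynomial.T n ⊗ₜ[ℂ] (reesE V x n)) = x := by
  apply (reesE V).injective
  rw [map_sum]
  simp_rw [reesE_T]
  exact Finsupp.sum_single (reesE V x)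


/-- Let `f : (V,F) → (W,G)` be a `ℂ`-linear map of finite
exhaustively and decreasingly filtered finite-dimensional complex vector spaces with
`f (F p) ⊆ G p` for all `p`.  Then `f` is strictly compatible with the filtrations
(`f (F p) = range f ∩ G p` for all `p`) if and only if the cokernel of
`ξ(f) : ξ(V,F) → ξ(W,G)` has no `λ`-torsion: for every `y ∈ ξ(W,G)`, if
`λ • y ∈ (f ⊗ id) (ξ(V,F))` then `y ∈ (f ⊗ id) (ξ(V,F))`. -/
theorem reesModule_strict_iff_no_lambda_torsion
    (V : Type*) [AddCommGroup V] [Module ℂ V] [FiniteDimensional ℂ V]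
    (W : Type*) [AddCommGroup W] [Module ℂ W] [FiniteDimensional ℂ W]
    (F : ℤ → Submodule ℂ V) (G : ℤ → Submodule ℂ W)
    (hFdec : ∀ p : ℤ, F (p + 1) ≤ F p)
    (hFfin : ∃ a b : ℤ, a ≤ b ∧ (∀ p ≤ a, F p = ⊤) ∧ (∀ p, b ≤ p → F p = ⊥))
    (hGdec : ∀ p : ℤ, G (p + 1) ≤ G p)
    (hGfin : ∃ a b : ℤ, a ≤ b ∧ (∀ p ≤ a, G p = ⊤) ∧ (∀ p, b ≤ p → G p = ⊥))
    (f : V →ₗ[ℂ] W) (hf : ∀ p : ℤ, (F p).map f ≤ G p) :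
    (∀ p : ℤ, (F p).map f = LinearMap.range f ⊓ G p) ↔
      (∀ y ∈ ReesModule W G,
        (Polynomial.X : Polynomial ℂ) • y ∈
            Submodule.map ((f.baseChange (LaurentPolynomial ℂ)).restrictScalars
              (Polynomial ℂ)) (ReesModule V F) →
          y ∈ Submodule.map ((f.baseChange (LaurentPolynomial ℂ)).restrictScalars
              (Polynomial ℂ)) (ReesModule V F)) := by
  have hGant : Antitone G := antitone_int_of_succ_le hGdec
  constructor
  · intro hs y hy hXy
    obtain ⟨x, hx, hfx⟩ := hXy
    have hxF := (mem_reesModule_iff hFdec x).1 hx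
    have hyG := (mem_reesModule_iff hGdec y).1 hy
    have key : ∀ n : ℤ, ∃ u ∈ F (-n), f u = reesE W y n := by
      intro n
      have h1 : f (reesE V x (n + 1)) = reesE W y n := by
        have h := congrArg (fun z => reesE W z (n + 1)) hfx
        simp only [LinearMap.restrictScalars_apply] at h
        rw [reesE_baseChange] at h
        rw [h, reesE_X_smul]
        norm_num
      have h2 : reesE W y n ∈ (F (-n)).map f := by
        rw [hs (-n)]
        exact ⟨⟨_, h1⟩, hyG n⟩
      simpa [Submodule.mem_map] using h2
    choose u huF hufu using key
    refine ⟨∑ n ∈ (reesE W y).support, LaurentPolynomial.T n ⊗ₜ[ℂ] u n, ?_, ?_⟩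
    · exact Submodule.sum_mem _ fun n _ => Submodule.subset_span
        ⟨-n, u n, by simpa using huF n, by rw [neg_neg]⟩
    · show (f.baseChange (LaurentPolynomial ℂ))
        (∑ n ∈ (reesE W y).support, LaurentPolynomial.T n ⊗ₜ[ℂ] u n) = y
      rw [map_sum]
      simp_rw [LinearMap.baseChange_tmul, hufu]
      exact sum_T_reesE y
  · intro ht p
    refine le_antisymm (le_inf ?_ (hf p)) ?_
    · rintro w ⟨v, _, rfl⟩
      exact ⟨v, rfl⟩
    rintro w ⟨⟨v, rfl⟩, hwG⟩
    obtain ⟨a, b, hab, ha, hb⟩ := hFfin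
    set N : ℕ := (p - a).toNat with hN
    have hva : v ∈ F (p - N) := by
      have h : F (p - N) = ⊤ := ha _ (by have := Int.self_le_toNat (p - a); omega)
      simp [h]
    have main : ∀ j : ℕ,
        LaurentPolynomial.T ((j : ℤ) - p) ⊗ₜ[ℂ] (f v) ∈
          Submodule.map ((f.baseChange (LaurentPolynomial ℂ)).restrictScalars
            (Polynomial ℂ)) (ReesModule V F) →
        LaurentPolynomial.T (-p) ⊗ₜ[ℂ] (f v) ∈
          Submodule.map ((f.baseChange (LaurentPolynomial ℂ)).restrictScalars
            (Polynomial ℂ)) (ReesModule V F) := by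
      intro j
      induction j with
      | zero => intro h; rwa [show ((0 : ℕ) : ℤ) - p = -p by omega] at h
      | succ j ih =>
          intro h
          apply ih
          apply ht (LaurentPolynomial.T ((j : ℤ) - p) ⊗ₜ[ℂ] (f v))
          · exact Submodule.subset_span
              ⟨p - j, f v, hGant (by omega) hwG, by rw [neg_sub]⟩
          · have hX : (Polynomial.X : Polynomial ℂ) •
                ((LaurentPolynomial.T ((j : ℤ) - p) : LaurentPolynomial ℂ) ⊗ₜ[ℂ] (f v)) =
                (LaurentPolynomial.T (((j : ℕ) + 1 : ℤ) - p) : LaurentPolynomial ℂ) ⊗ₜ[ℂ] (f v) := by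
              rw [TensorProduct.smul_tmul']
              congr 1
              rw [Algebra.smul_def, LaurentPolynomial.algebraMap_eq_toLaurent,
                Polynomial.toLaurent_X, ← LaurentPolynomial.T_add]
              congr 1
              omega
            rw [hX]
            rwa [show ((j + 1 : ℕ) : ℤ) = ((j : ℕ) : ℤ) + 1 by push_cast; ring] at h
    obtain ⟨x, hx, hfx⟩ := main N
      ⟨LaurentPolynomial.T ((N : ℤ) - p) ⊗ₜ[ℂ] v,
        Submodule.subset_span ⟨p - N, v, hva, by rw [neg_sub]⟩,
        by simp [LinearMap.baseChange_tmul]⟩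
    have hxF := (mem_reesModule_iff hFdec x).1 hx
    have hcoef : f (reesE V x (-p)) = f v := by
      have h := congrArg (fun z => reesE W z (-p)) hfx
      simp only [LinearMap.restrictScalars_apply] at h
      rw [reesE_baseChange] at h
      rw [h, reesE_T, Finsupp.single_apply]
      simp
    exact ⟨reesE V x (-p), by simpa using hxF (-p), hcoef⟩
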